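/- For all x ∈ [0,1] and all k ∈ ℂ \ {0}, the Jost solution satisfies the integral equation f₊(x,k) = e^{ixk} − ∫ₓ¹ ( sin(k(x−t))/k )·q(t)·f₊(t,k) dt. -/

import Mathlib

open MeasureTheory Set

noncomputable section

/-- `y` solves `-y'' + q y = E y` on `[0,∞)`: `y` is continuously differentiable with
derivative `y'`, `y'` is absolutely continuous (an indefinite integral of a locally
integrable `y''`), and the equation holds for a.e. `x ≥ 0`. -/
def SchrodingerSol (q : ℝ → ℂ) (E : ℂ) (y y' : ℝ → ℂ) : Prop :=
  (∀ x : ℝ, 0 ≤ x → HasDerivAt y (y' x) x) ∧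
  ∃ y'' : ℝ → ℂ,
    (∀ X : ℝ, IntegrableOn y'' (Icc 0 X)) ∧
    (∀ x : ℝ, 0 ≤ x → y' x = y' 0 + ∫ t in (0:ℝ)..x, y'' t) ∧
    (∀ᵐ x : ℝ, 0 ≤ x → -y'' x + q x * y x = E * y x)

/-- The Jost solution `f₊(·,k)` (with derivative `f'`): it solves
`-y'' + q y = k² y` and equals `e^{ikx}` for `x ≥ 1`. -/
def IsJost (q : ℝ → ℂ) (k : ℂ) (f f' : ℝ → ℂ) : Prop :=
  SchrodingerSol q (k ^ 2) f f' ∧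
  ∀ x : ℝ, 1 ≤ x → f x = Complex.exp (Complex.I * k * (x : ℂ))

/-- The fundamental solution `φ(·,k)` (with derivative `y'`): it solves
`-y'' + q y = k² y` with `y(0) = 0`, `y'(0) = 1`. -/
def IsPhi (q : ℝ → ℂ) (k : ℂ) (y y' : ℝ → ℂ) : Prop :=
  SchrodingerSol q (k ^ 2) y y' ∧ y 0 = 0 ∧ y' 0 = 1

open intervalIntegral

private lemma swap_aux (x : ℝ) (hx : x ≤ 1) (g : ℝ → ℂ) (hg : IntegrableOn g (Ioc x 1))
    (s s' : ℝ → ℂ) (hs : ∀ t, HasDerivAt s (s' t) t) (hs' : Continuous s') :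
    ∫ t in x..1, s' t * (∫ u in x..t, g u) = ∫ u in x..1, (s 1 - s u) * g u := by
  set ν := volume.restrict (Ioc x 1) with hν
  set F : ℝ → ℝ → ℂ :=
    fun t u => {p : ℝ × ℝ | p.2 ≤ p.1}.indicator (fun p => s' p.1 * g p.2) (t, u) with hF
  have hs'int : Integrable s' ν := hs'.integrableOn_Ioc
  have hFi : Integrable (Function.uncurry F) (ν.prod ν) := by
    have h1 : Integrable (fun p : ℝ × ℝ => s' p.1 * g p.2) (ν.prod ν) := hs'int.mul_prod hg
    exact h1.indicator (measurableSet_le measurable_snd measurable_fst)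
  have hswap := MeasureTheory.integral_integral_swap hFi
  have hL : ∫ t in x..1, s' t * (∫ u in x..t, g u) = ∫ t, (∫ u, F t u ∂ν) ∂ν := by
    rw [integral_of_le hx]
    refine setIntegral_congr_fun measurableSet_Ioc (fun t ht => ?_)
    have hFt : (fun u => F t u) = fun u => s' t * (Iic t).indicator g u := by
      funext u; by_cases h : u ≤ t <;> simp [hF, Set.indicator_apply, h]
    rw [hFt, MeasureTheory.integral_const_mul, hν,
      MeasureTheory.integral_indicator measurableSet_Iic, Measure.restrict_restrict measurableSet_Iic]
    have hseq : Iic t ∩ Ioc x 1 = Ioc x t := by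
      ext u; simp only [mem_inter_iff, mem_Iic, mem_Ioc]
      exact ⟨fun ⟨h1, h2, _⟩ => ⟨h2, h1⟩, fun ⟨h1, h2⟩ => ⟨h2, h1, h2.trans ht.2⟩⟩
    rw [hseq, ← integral_of_le ht.1.le]
  have hR : ∫ u, (∫ t, F t u ∂ν) ∂ν = ∫ u in x..1, (s 1 - s u) * g u := by
    rw [integral_of_le hx]
    refine setIntegral_congr_fun measurableSet_Ioc (fun u hu => ?_)
    have hFu : (fun t => F t u) = fun t => (Ici u).indicator s' t * g u := by
      funext t; by_cases h : u ≤ t <;> simp [hF, Set.indicator_apply, h]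
    rw [hFu, MeasureTheory.integral_mul_const, hν,
      MeasureTheory.integral_indicator measurableSet_Ici, Measure.restrict_restrict measurableSet_Ici]
    have hseq : Ici u ∩ Ioc x 1 = Icc u 1 := by
      ext t; simp only [mem_inter_iff, mem_Ici, mem_Ioc, mem_Icc]
      exact ⟨fun ⟨h1, _, h3⟩ => ⟨h1, h3⟩, fun ⟨h1, h2⟩ => ⟨h1, hu.1.trans_le h1, h2⟩⟩
    rw [hseq, MeasureTheory.integral_Icc_eq_integral_Ioc, ← integral_of_le hu.2,
      integral_eq_sub_of_hasDerivAt (fun t _ => hs t) (hs'.intervalIntegrable u 1)]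
  rw [hL, hswap, hR]

private lemma parts_aux (x : ℝ) (hx : x ≤ 1) (g : ℝ → ℂ) (hg : IntegrableOn g (Ioc x 1))
    (s s' : ℝ → ℂ) (hs : ∀ t, HasDerivAt s (s' t) t) (hs' : Continuous s')
    (φ : ℝ → ℂ) (hφ : ∀ t ∈ Icc x 1, φ t = φ x + ∫ u in x..t, g u) :
    ∫ t in x..1, s' t * φ t = s 1 * φ 1 - s x * φ x - ∫ t in x..1, s t * g t := by
  have hgi : IntervalIntegrable g volume x 1 := by
    rw [intervalIntegrable_iff_integrableOn_Ioc_of_le hx]; exact hg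
  have hsc : Continuous s := by
    rw [continuous_iff_continuousAt]; exact fun t => (hs t).continuousAt
  have huIcc : uIcc x 1 = Icc x 1 := uIcc_of_le hx
  have h1 : ∫ t in x..1, s' t * φ t
      = ∫ t in x..1, (s' t * φ x + s' t * (∫ u in x..t, g u)) := by
    refine integral_congr (fun t ht => ?_)
    rw [huIcc] at ht
    rw [hφ t ht]; ring
  have hprim : ContinuousOn (fun t => ∫ u in x..t, g u) (Icc x 1) := by
    have := continuousOn_primitive_interval (a := x) (b := 1) (μ := volume) (f := g) ?_
    · rwa [huIcc] at this
    · rw [huIcc, integrableOn_Icc_iff_integrableOn_Ioc]; exact hg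
  have hi1 : IntervalIntegrable (fun t => s' t * φ x) volume x 1 :=
    (hs'.intervalIntegrable x 1).mul_const _
  have hi2 : IntervalIntegrable (fun t => s' t * (∫ u in x..t, g u)) volume x 1 := by
    apply (hs'.intervalIntegrable x 1).mul_continuousOn
    rwa [huIcc]
  have hs'i : ∫ t in x..1, s' t = s 1 - s x :=
    integral_eq_sub_of_hasDerivAt (fun t _ => hs t) (hs'.intervalIntegrable x 1)
  have hsplit2 : ∫ u in x..1, (s 1 - s u) * g u
      = s 1 * (∫ u in x..1, g u) - ∫ u in x..1, s u * g u := by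
    rw [show (fun u => (s 1 - s u) * g u) = fun u => s 1 * g u - s u * g u by funext u; ring]
    rw [integral_sub (hgi.const_mul _) (hgi.continuousOn_mul (hsc.continuousOn)),
      intervalIntegral.integral_const_mul]
  rw [h1, integral_add hi1 hi2, intervalIntegral.integral_mul_const, hs'i,
    swap_aux x hx g hg s s' hs hs', hsplit2]
  have hφ1 : ∫ u in x..1, g u = φ 1 - φ x := by
    rw [hφ 1 (right_mem_Icc.2 hx)]; ring
  rw [hφ1]; ring



theorem statement9'
    (q : ℝ → ℂ) (hqint : Integrable q)
    (hqsupp : ∀ x : ℝ, x ∉ Icc (0:ℝ) 1 → q x = 0)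
    (k : ℂ) (hk : k ≠ 0)
    (f f' : ℝ → ℂ)
    (hder : ∀ x : ℝ, 0 ≤ x → HasDerivAt f (f' x) x)
    (f'' : ℝ → ℂ) (hf''int : ∀ X : ℝ, IntegrableOn f'' (Icc 0 X))
    (hf'eq : ∀ x : ℝ, 0 ≤ x → f' x = f' 0 + ∫ t in (0:ℝ)..x, f'' t)
    (hae : ∀ᵐ x : ℝ, 0 ≤ x → -f'' x + q x * f x = k ^ 2 * f x)
    (hjost : ∀ x : ℝ, 1 ≤ x → f x = Complex.exp (Complex.I * k * (x : ℂ))) :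
    ∀ x : ℝ, x ∈ Icc (0:ℝ) 1 →
      f x = Complex.exp (Complex.I * (x : ℂ) * k)
        - ∫ t in x..1, (Complex.sin (k * ((x : ℂ) - (t : ℂ))) / k) * q t * f t := by
  intro x hx
  obtain ⟨hx0, hx1⟩ := hx
  set w : ℝ → ℂ := fun t => k * ((x:ℂ) - (t:ℂ)) with hwdef
  set s : ℝ → ℂ := fun t => Complex.sin (w t) / k with hsdef
  set s' : ℝ → ℂ := fun t => -Complex.cos (w t) with hs'def
  set s'' : ℝ → ℂ := fun t => -k * Complex.sin (w t) with hs''def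
  have hw : ∀ t : ℝ, HasDerivAt w (-k) t := by
    intro t
    have h0 : HasDerivAt (fun t : ℝ => ((t:ℂ))) 1 t := (hasDerivAt_id t).ofReal_comp
    have := ((hasDerivAt_const t ((x:ℂ))).sub h0).const_mul k
    simpa [hwdef] using this
  have hwc : Continuous w := by
    rw [continuous_iff_continuousAt]; exact fun t => (hw t).continuousAt
  have hsd : ∀ t, HasDerivAt s (s' t) t := by
    intro t
    have h1 := (((Complex.hasDerivAt_sin (w t)).comp t (hw t))).div_const k
    convert h1 using 1
    show -Complex.cos (w t) = _
    rw [mul_neg, neg_div, mul_div_cancel_right₀ _ hk]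
    all_goals rfl
  have hs'd : ∀ t, HasDerivAt s' (s'' t) t := by
    intro t
    have h1 := (((Complex.hasDerivAt_cos (w t)).comp t (hw t))).neg
    convert h1 using 1
    show -k * Complex.sin (w t) = _; ring
    all_goals rfl
  have hsc : Continuous s := by
    rw [continuous_iff_continuousAt]; exact fun t => (hsd t).continuousAt
  have hs'c : Continuous s' := (Complex.continuous_cos.comp hwc).neg
  have hs''c : Continuous s'' :=
    continuous_const.mul (Complex.continuous_sin.comp hwc)
  have huIcc : uIcc x 1 = Icc x 1 := uIcc_of_le hx1
  have hfc : ContinuousOn f (Icc x 1) := fun t ht =>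
    ((hder t (hx0.trans ht.1)).continuousAt).continuousWithinAt
  -- integrability facts
  have hq1 : IntervalIntegrable q volume x 1 := hqint.intervalIntegrable
  have hf''Ioc : IntegrableOn f'' (Ioc x 1) :=
    (hf''int 1).mono_set (fun t ht => ⟨hx0.trans ht.1.le, ht.2⟩)
  have hf''1 : IntervalIntegrable f'' volume x 1 := by
    rw [intervalIntegrable_iff_integrableOn_Ioc_of_le hx1]; exact hf''Ioc
  have hi_sf'' : IntervalIntegrable (fun t => s t * f'' t) volume x 1 :=
    hf''1.continuousOn_mul (hsc.continuousOn)
  have hi_sf : IntervalIntegrable (fun t => s t * f t) volume x 1 := by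
    apply ContinuousOn.intervalIntegrable
    rw [huIcc]; exact hsc.continuousOn.mul hfc
  -- continuity of f' on [0,1]
  have hf'c : ContinuousOn f' (Icc x 1) := by
    have h1 : ContinuousOn (fun t => f' 0 + ∫ u in (0:ℝ)..t, f'' u) (Icc 0 1) := by
      apply continuousOn_const.add
      have := continuousOn_primitive_interval (a := (0:ℝ)) (b := 1) (μ := volume) (f := f'') ?_
      · rwa [uIcc_of_le (zero_le_one)] at this
      · rw [uIcc_of_le (zero_le_one)]; exact hf''int 1
    have h2 : ContinuousOn f' (Icc 0 1) := h1.congr (fun t ht => hf'eq t ht.1)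
    exact h2.mono (fun t ht => ⟨hx0.trans ht.1, ht.2⟩)
  have hi_f' : IntervalIntegrable f' volume x 1 := by
    apply ContinuousOn.intervalIntegrable; rwa [huIcc]
  -- Step A: rewrite the integrand a.e.
  have stepA : (∫ t in x..1, (Complex.sin (k * ((x : ℂ) - (t : ℂ))) / k) * q t * f t)
      = ∫ t in x..1, (s t * f'' t + k ^ 2 * (s t * f t)) := by
    apply intervalIntegral.integral_congr_ae
    rw [uIoc_of_le hx1]
    filter_upwards [hae] with t h ht
    have h0 : 0 ≤ t := hx0.trans ht.1.le
    have heq : q t * f t = f'' t + k ^ 2 * f t := by linear_combination (h h0)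
    have : Complex.sin (k * ((x : ℂ) - (t : ℂ))) / k = s t := rfl
    rw [this, mul_assoc, heq]; ring
  -- f' t = f' x + ∫ x..t f''
  have hφ : ∀ t ∈ Icc x 1, f' t = f' x + ∫ u in x..t, f'' u := by
    intro t ht
    have h0x : IntervalIntegrable f'' volume 0 x := by
      rw [intervalIntegrable_iff_integrableOn_Ioc_of_le hx0]
      exact (hf''int x).mono_set Ioc_subset_Icc_self
    have hxt : IntervalIntegrable f'' volume x t := by
      rw [intervalIntegrable_iff_integrableOn_Ioc_of_le ht.1]
      exact (hf''int 1).mono_set (fun u hu => ⟨hx0.trans hu.1.le, hu.2.trans ht.2⟩)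
    rw [hf'eq t (hx0.trans ht.1), hf'eq x hx0,
      ← intervalIntegral.integral_add_adjacent_intervals h0x hxt]
    ring
  -- Step C: parts for ∫ s f''
  have stepC : ∫ t in x..1, s' t * f' t
      = s 1 * f' 1 - s x * f' x - ∫ t in x..1, s t * f'' t :=
    parts_aux x hx1 f'' hf''Ioc s s' hsd hs'c f' hφ
  -- Step D: classical parts for ∫ s' f'
  have stepD : ∫ t in x..1, s' t * f' t
      = s' 1 * f 1 - s' x * f x - ∫ t in x..1, s'' t * f t := by
    apply intervalIntegral.integral_mul_deriv_eq_deriv_mul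
    · exact fun t _ => hs'd t
    · intro t ht; rw [huIcc] at ht; exact hder t (hx0.trans ht.1)
    · exact hs''c.intervalIntegrable x 1
    · exact hi_f'
  have hs''f : ∫ t in x..1, s'' t * f t = -k ^ 2 * ∫ t in x..1, s t * f t := by
    rw [← intervalIntegral.integral_const_mul]
    apply intervalIntegral.integral_congr
    intro t _
    simp only [hs''def, hsdef]
    field_simp
  -- values at the endpoints
  have hsx : s x = 0 := by simp [hsdef, hwdef]
  have hs'x : s' x = -1 := by simp [hs'def, hwdef]
  have hf1 : f 1 = Complex.exp (Complex.I * k) := by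
    have := hjost 1 le_rfl; simpa using this
  have hf'1 : f' 1 = Complex.I * k * Complex.exp (Complex.I * k) := by
    have h1 : HasDerivWithinAt f (f' 1) (Ici (1:ℝ)) 1 :=
      (hder 1 zero_le_one).hasDerivWithinAt
    have h2 : HasDerivAt (fun t : ℝ => Complex.exp (Complex.I * k * (t:ℂ)))
        (Complex.I * k * Complex.exp (Complex.I * k)) 1 := by
      have hlin : HasDerivAt (fun t : ℝ => Complex.I * k * (t:ℂ)) (Complex.I * k) 1 := by
        have h0 : HasDerivAt (fun t : ℝ => ((t:ℂ))) 1 (1:ℝ) := (hasDerivAt_id (1:ℝ)).ofReal_comp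
        simpa using h0.const_mul (Complex.I * k)
      simpa [mul_comm] using hlin.cexp
    have h3 : HasDerivWithinAt f (Complex.I * k * Complex.exp (Complex.I * k)) (Ici (1:ℝ)) 1 :=
      (h2.hasDerivWithinAt).congr (fun t ht => hjost t ht) (hjost 1 le_rfl)
    exact (uniqueDiffOn_Ici (1:ℝ) 1 Set.self_mem_Ici).eq_deriv _ h1 h3
  -- assemble
  have key : s 1 * f' 1 - s' 1 * f 1 = Complex.exp (Complex.I * (x:ℂ) * k) := by
    rw [hf1, hf'1]
    simp only [hsdef, hs'def, hwdef, Complex.ofReal_one]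
    have hexp : Complex.exp (Complex.I * (x:ℂ) * k)
        = Complex.exp (Complex.I * k) * Complex.exp ((k * ((x:ℂ) - 1)) * Complex.I) := by
      rw [← Complex.exp_add]; congr 1; ring
    rw [hexp, Complex.exp_mul_I]
    field_simp
    ring
  have hT : (∫ t in x..1, (Complex.sin (k * ((x : ℂ) - (t : ℂ))) / k) * q t * f t)
      = s 1 * f' 1 - s' 1 * f 1 - f x := by
    rw [stepA, intervalIntegral.integral_add hi_sf'' (hi_sf.const_mul _),
      intervalIntegral.integral_const_mul]
    have e1 : ∫ t in x..1, s t * f'' t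
        = s 1 * f' 1 - s x * f' x - ∫ t in x..1, s' t * f' t := by
      linear_combination stepC
    rw [e1, stepD, hs''f, hsx, hs'x]
    ring
  rw [hT, key]
  ring


/-- For `x ∈ [0,1]` and `k ≠ 0` the Jost solution satisfies
`f₊(x,k) = e^{ixk} - ∫ₓ¹ (sin(k(x-t))/k) q(t) f₊(t,k) dt`. -/
theorem statement9
    (q : ℝ → ℂ) (hqint : Integrable q)
    (hqsupp : ∀ x : ℝ, x ∉ Icc (0:ℝ) 1 → q x = 0)
    (k : ℂ) (hk : k ≠ 0)
    (f f' : ℝ → ℂ)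
    (hf : IsJost q k f f') :
    ∀ x : ℝ, x ∈ Icc (0:ℝ) 1 →
      f x = Complex.exp (Complex.I * (x : ℂ) * k)
        - ∫ t in x..1, (Complex.sin (k * ((x : ℂ) - (t : ℂ))) / k) * q t * f t := by
  obtain ⟨⟨hder, f'', hf''int, hf'eq, hae⟩, hjost⟩ := hf
  exact statement9' q hqint hqsupp k hk f f' hder f'' hf''int hf'eq hae hjost
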